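/- Let a ≥ 1 and n ≥ 2, and let C_n ⊆ R^n be the cone generated by the Sym(n)-orbit of (1, a, 0, …, 0). Then for any u = (u_1,…,u_n) ∈ R^n with u_1 ≤ u_2 ≤ … ≤ u_n: u ∈ C_n if and only if u_1 ≥ 0 and a(u_1 + … + u_{n−1}) ≥ u_n. -/

import Mathlib

/-- Membership in the cone in `ℝⁿ` generated by `B`. -/
def inConeF {n : ℕ} (B : Set (Fin n → ℝ)) (u : Fin n → ℝ) : Prop :=
  ∃ (k : ℕ) (c : Fin k → ℝ) (b : Fin k → Fin n → ℝ),
    (∀ i, 0 ≤ c i) ∧ (∀ i, b i ∈ B) ∧ u = ∑ i, c i • b i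

lemma inConeF_of_eq_zero {n : ℕ} {B : Set (Fin n → ℝ)} {u : Fin n → ℝ}
    (h : ∀ i, u i = 0) : inConeF B u := by
  refine ⟨0, Fin.elim0, Fin.elim0, (fun i => i.elim0), (fun i => i.elim0), ?_⟩
  funext x
  simp [h x]

lemma inConeF_single {n : ℕ} {B : Set (Fin n → ℝ)} {b : Fin n → ℝ} {c : ℝ}
    (hb : b ∈ B) (hc : 0 ≤ c) : inConeF B (fun x => c * b x) := by
  refine ⟨1, fun _ => c, fun _ => b, fun _ => hc, fun _ => hb, ?_⟩
  funext x
  simp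

lemma inConeF_add {n : ℕ} {B : Set (Fin n → ℝ)} {u v : Fin n → ℝ}
    (hu : inConeF B u) (hv : inConeF B v) : inConeF B (fun x => u x + v x) := by
  obtain ⟨k1, c1, b1, hc1, hb1, he1⟩ := hu
  obtain ⟨k2, c2, b2, hc2, hb2, he2⟩ := hv
  refine ⟨k1 + k2, Fin.append c1 c2, Fin.append b1 b2, ?_, ?_, ?_⟩
  · intro i
    refine Fin.addCases (fun j => ?_) (fun j => ?_) i <;>
      simp [Fin.append_left, Fin.append_right, hc1, hc2]
  · intro i
    refine Fin.addCases (fun j => ?_) (fun j => ?_) i <;>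
      simp [Fin.append_left, Fin.append_right, hb1, hb2]
  · funext x
    rw [he1, he2]
    simp only [Finset.sum_apply, Pi.smul_apply, smul_eq_mul]
    rw [Fin.sum_univ_add]
    simp [Fin.append_left, Fin.append_right]

lemma inConeF_finsum {n : ℕ} {B : Set (Fin n → ℝ)} {ι : Type*} [DecidableEq ι] (s : Finset ι)
    (c : ι → ℝ) (b : ι → Fin n → ℝ)
    (hc : ∀ i ∈ s, 0 ≤ c i) (hb : ∀ i ∈ s, b i ∈ B) :
    inConeF B (fun x => ∑ i ∈ s, c i * b i x) := by
  induction s using Finset.induction_on with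
  | empty => exact inConeF_of_eq_zero (by simp)
  | @insert e s' hnotmem ih =>
    have h1 : inConeF B (fun x => c e * b e x) :=
      inConeF_single (hb e (by simp)) (hc e (by simp))
    have h2 : inConeF B (fun x => ∑ i ∈ s', c i * b i x) :=
      ih (fun i hi => hc i (by simp [hi])) (fun i hi => hb i (by simp [hi]))
    have := inConeF_add h1 h2
    convert this using 1
    funext x
    rw [Finset.sum_insert hnotmem]

def gen {n : ℕ} (a : ℝ) (i k : Fin n) : Fin n → ℝ :=
  fun x => (if x = i then 1 else 0) + (if x = k then a else 0)

lemma gen_mem {n : ℕ} (hn : 2 ≤ n) (a : ℝ) (g : Fin n → ℝ)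
    (hg : ∀ i : Fin n, g i = if (i : ℕ) = 0 then 1 else if (i : ℕ) = 1 then a else 0)
    {i k : Fin n} (hik : i ≠ k) :
    gen a i k ∈ {v : Fin n → ℝ | ∃ σ : Equiv.Perm (Fin n), v = fun x => g (σ.symm x)} := by
  set i0 : Fin n := ⟨0, by omega⟩ with hi0
  set i1 : Fin n := ⟨1, by omega⟩ with hi1
  have h01 : i0 ≠ i1 := by simp [hi0, hi1, Fin.ext_iff]
  set s : Fin n := Equiv.swap i0 i i1 with hs
  set σ : Equiv.Perm (Fin n) := (Equiv.swap i0 i).trans (Equiv.swap s k) with hσ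
  have hsi : s ≠ i := by
    intro h
    have h2 : Equiv.swap i0 i i0 = i := Equiv.swap_apply_left _ _
    have := (Equiv.swap i0 i).injective (h2.trans h.symm)
    exact h01 this
  have hσ0 : σ i0 = i := by
    have h2 : Equiv.swap i0 i i0 = i := Equiv.swap_apply_left _ _
    simp only [hσ, Equiv.trans_apply, h2]
    exact Equiv.swap_apply_of_ne_of_ne (Ne.symm hsi) hik
  have hσ1 : σ i1 = k := by
    simp only [hσ, Equiv.trans_apply, ← hs]
    exact Equiv.swap_apply_left _ _
  refine ⟨σ, ?_⟩
  funext x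
  have e0 : σ.symm x = i0 ↔ x = i := by
    rw [Equiv.symm_apply_eq, hσ0, eq_comm]
  have e1 : σ.symm x = i1 ↔ x = k := by
    rw [Equiv.symm_apply_eq, hσ1, eq_comm]
  have v0 : ((σ.symm x : ℕ) = 0) ↔ σ.symm x = i0 := by
    rw [Fin.ext_iff]
  have v1 : ((σ.symm x : ℕ) = 1) ↔ σ.symm x = i1 := by
    rw [Fin.ext_iff]
  rw [gen, hg]
  by_cases hxi : x = i
  · have h0 : ((σ.symm x : ℕ) = 0) := v0.mpr (e0.mpr hxi)
    rw [if_pos hxi, if_neg (show ¬ x = k from fun h => hik (hxi.symm.trans h)), if_pos h0]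
    norm_num
  · by_cases hxk : x = k
    · have h0 : ¬ ((σ.symm x : ℕ) = 0) := fun h => hxi (e0.mp (v0.mp h))
      have h1 : ((σ.symm x : ℕ) = 1) := v1.mpr (e1.mpr hxk)
      rw [if_neg hxi, if_pos hxk, if_neg h0, if_pos h1]
      norm_num
    · have h0 : ¬ ((σ.symm x : ℕ) = 0) := fun h => hxi (e0.mp (v0.mp h))
      have h1 : ¬ ((σ.symm x : ℕ) = 1) := fun h => hxk (e1.mp (v1.mp h))
      rw [if_neg hxi, if_neg hxk, if_neg h0, if_neg h1]
      norm_num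

lemma tight_case {n : ℕ} (hn : 2 ≤ n) (a : ℝ) (g : Fin n → ℝ)
    (hg : ∀ i : Fin n, g i = if (i : ℕ) = 0 then 1 else if (i : ℕ) = 1 then a else 0)
    (u : Fin n → ℝ) (hu : ∀ i, 0 ≤ u i) (k0 : Fin n)
    (ht : (1 + a) * u k0 = a * ∑ i, u i) :
    inConeF {v : Fin n → ℝ | ∃ σ : Equiv.Perm (Fin n), v = fun x => g (σ.symm x)} u := by
  have hsum := Finset.add_sum_erase Finset.univ u (Finset.mem_univ k0)
  have hS : u k0 = a * ∑ i ∈ Finset.univ.erase k0, u i := by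
    rw [← hsum] at ht
    ring_nf at ht ⊢
    linarith
  have hdecomp : u = fun x => ∑ i ∈ Finset.univ.erase k0, u i * gen a i k0 x := by
    funext x
    simp only [gen, mul_add, Finset.sum_add_distrib, mul_ite, mul_one, mul_zero]
    rw [Finset.sum_ite_eq, Finset.sum_ite_irrel, Finset.sum_const_zero]
    by_cases hx : x = k0
    · subst hx
      simp only [Finset.mem_erase, ne_eq, not_true_eq_false, false_and, if_false, if_pos rfl,
        if_true, ← Finset.sum_mul]
      rw [hS]
      ring
    · simp [Finset.mem_erase, hx]
  rw [hdecomp]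
  exact inConeF_finsum _ _ _ (fun i _ => hu i)
    (fun i hi => gen_mem hn a g hg (Finset.mem_erase.mp hi).1)

lemma key_lemma {n : ℕ} (hn : 2 ≤ n) (a : ℝ) (ha : 1 ≤ a) (g : Fin n → ℝ)
    (hg : ∀ i : Fin n, g i = if (i : ℕ) = 0 then 1 else if (i : ℕ) = 1 then a else 0) :
    ∀ (N : ℕ) (s : Finset (Fin n)) (u : Fin n → ℝ), s.card ≤ N →
      (∀ i, 0 ≤ u i) → (∀ i, i ∉ s → u i = 0) →
      (∀ k, (1 + a) * u k ≤ a * ∑ i, u i) →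
      inConeF {v : Fin n → ℝ | ∃ σ : Equiv.Perm (Fin n), v = fun x => g (σ.symm x)} u := by
  intro N
  induction N with
  | zero =>
    intro s u hcard hu hsupp hineq
    have hs : s = ∅ := Finset.card_eq_zero.mp (Nat.le_zero.mp hcard)
    exact inConeF_of_eq_zero (fun i => hsupp i (by simp [hs]))
  | succ N ih =>
    intro s u hcard hu hsupp hineq
    set T := ∑ i, u i with hT
    by_cases htight : ∃ k0, (1 + a) * u k0 = a * T
    · obtain ⟨k0, hk0⟩ := htight
      exact tight_case hn a g hg u hu k0 hk0
    push_neg at htight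
    have hstrict : ∀ k, (1 + a) * u k < a * T := fun k =>
      lt_of_le_of_ne (hineq k) (htight k)
    have ha0 : (0:ℝ) < a := by linarith
    have hTpos : 0 < T := by
      have h := hstrict ⟨0, by omega⟩
      have h2 := hu ⟨0, by omega⟩
      nlinarith
    set P := Finset.univ.filter (fun i : Fin n => 0 < u i) with hP
    have hmemP : ∀ i, i ∈ P ↔ 0 < u i := by intro i; simp [hP]
    have hPne : P.Nonempty := by
      by_contra h
      rw [Finset.not_nonempty_iff_eq_empty] at h
      have hz : ∀ i, i ∈ Finset.univ → u i ≤ 0 := by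
        intro i _
        by_contra h2
        push_neg at h2
        have : i ∈ P := (hmemP i).mpr h2
        simp [h] at this
      have : T ≤ 0 := Finset.sum_nonpos hz
      linarith
    obtain ⟨j, hjP, hjmin⟩ := P.exists_min_image u hPne
    have huj : 0 < u j := (hmemP j).mp hjP
    have hQne : (P.erase j).Nonempty := by
      by_contra h
      rw [Finset.not_nonempty_iff_eq_empty] at h
      have hz : ∀ i, i ≠ j → u i = 0 := by
        intro i hij
        rcases (hu i).lt_or_eq with h' | h'
        · exfalso
          have : i ∈ P.erase j := Finset.mem_erase.mpr ⟨hij, (hmemP i).mpr h'⟩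
          simp [h] at this
        · exact h'.symm
      have hTj : T = u j := by
        rw [hT, ← Finset.add_sum_erase _ u (Finset.mem_univ j)]
        rw [Finset.sum_eq_zero (fun i hi => hz i (Finset.mem_erase.mp hi).1)]
        ring
      have := hstrict j
      rw [hTj] at this
      linarith
    obtain ⟨m, hmQ, hmmin⟩ := (P.erase j).exists_min_image u hQne
    have hjm : j ≠ m := (Finset.mem_erase.mp hmQ).1.symm
    have hum : 0 < u m := (hmemP m).mp (Finset.mem_erase.mp hmQ).2
    have hjs : j ∈ s := by by_contra h; exact absurd (hsupp j h) (ne_of_gt huj)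
    have hms : m ∈ s := by by_contra h; exact absurd (hsupp m h) (ne_of_gt hum)
    by_cases hE3 : ((P.erase j).erase m).Nonempty
    · -- at least three positive coordinates
      obtain ⟨k0, hk00⟩ := hE3
      have hk0m : k0 ≠ m := (Finset.mem_erase.mp hk00).1
      have hk0Q : k0 ∈ P.erase j := (Finset.mem_erase.mp hk00).2
      have hk0j : k0 ≠ j := (Finset.mem_erase.mp hk0Q).1
      have hk0P : k0 ∈ P := (Finset.mem_erase.mp hk0Q).2
      have hjk0 : u j ≤ u k0 := hjmin k0 hk0P
      have hmk0 : u m ≤ u k0 := hmmin k0 hk0Q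
      set E := (Finset.univ.erase j).erase m with hE
      have hmemE : ∀ i, i ∈ E ↔ (i ≠ m ∧ i ≠ j) := by
        intro i; simp [hE, Finset.mem_erase]
      have hk0E : k0 ∈ E := (hmemE k0).mpr ⟨hk0m, hk0j⟩
      have hEne : E.Nonempty := ⟨k0, hk0E⟩
      set bnd : Fin n → ℝ := fun k => (a * T - (1 + a) * u k) / (2 * a) with hbnd
      set p := min (min (u j) (u m)) (E.inf' hEne bnd) with hp
      have hbndpos : ∀ k, 0 < bnd k := fun k => div_pos (by linarith [hstrict k]) (by linarith)
      have hppos : 0 < p := by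
        apply lt_min (lt_min huj hum)
        rw [Finset.lt_inf'_iff]
        exact fun b _ => hbndpos b
      have hpj : p ≤ u j := le_trans (min_le_left _ _) (min_le_left _ _)
      have hpm : p ≤ u m := le_trans (min_le_left _ _) (min_le_right _ _)
      have hpE : ∀ k, k ∈ E → p ≤ bnd k := fun k hk =>
        le_trans (min_le_right _ _) (Finset.inf'_le _ hk)
      have hmul : ∀ k, k ∈ E → 2*a*p ≤ a*T - (1+a)*u k := by
        intro k hk
        have h2 := hpE k hk
        rw [hbnd, le_div_iff₀ (by linarith : (0:ℝ) < 2*a)] at h2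
        linarith
      have hmulj : 2*a*p ≤ a*T - (1+a)*u j := by
        have h1 := hmul k0 hk0E
        nlinarith
      have hmulm : 2*a*p ≤ a*T - (1+a)*u m := by
        have h1 := hmul k0 hk0E
        nlinarith
      set u' : Fin n → ℝ :=
        fun z => u z - ((if z = j then p else 0) + (if z = m then p else 0)) with hu'
      have hu'j : u' j = u j - p := by simp [hu', hjm]
      have hu'm : u' m = u m - p := by simp [hu', Ne.symm hjm]
      have hu'other : ∀ z, z ≠ j → z ≠ m → u' z = u z := by
        intro z h1 h2; simp [hu', h1, h2]
      have hu'pos : ∀ z, 0 ≤ u' z := by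
        intro z
        by_cases h1 : z = j
        · rw [h1, hu'j]; linarith
        by_cases h2 : z = m
        · rw [h2, hu'm]; linarith
        rw [hu'other z h1 h2]; exact hu z
      have hT' : ∑ i, u' i = T - 2*p := by
        rw [hu']
        simp only [Finset.sum_sub_distrib, Finset.sum_add_distrib, Finset.sum_ite_eq',
          Finset.mem_univ, if_true, ← hT]
        ring
      have hineq' : ∀ k, (1 + a) * u' k ≤ a * ∑ i, u' i := by
        intro k
        rw [hT']
        by_cases h1 : k = j
        · rw [h1, hu'j]; nlinarith
        by_cases h2 : k = m
        · rw [h2, hu'm]; nlinarith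
        rw [hu'other k h1 h2]
        have := hmul k ((hmemE k).mpr ⟨h2, h1⟩)
        linarith
      have hcases : p = u j ∨ p = u m ∨ ∃ k1 ∈ E, p = bnd k1 := by
        rcases min_cases (min (u j) (u m)) (E.inf' hEne bnd) with ⟨h,_⟩|⟨h,_⟩
        · rcases min_cases (u j) (u m) with ⟨h2,_⟩|⟨h2,_⟩
          · left; rw [hp, h, h2]
          · right; left; rw [hp, h, h2]
        · obtain ⟨k1, hk1, hk1e⟩ := Finset.exists_mem_eq_inf' hEne bnd
          right; right; exact ⟨k1, hk1, by rw [hp, h, hk1e]⟩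
      have hprog : inConeF {v : Fin n → ℝ | ∃ σ : Equiv.Perm (Fin n), v = fun x => g (σ.symm x)} u' := by
        rcases hcases with hc|hc|⟨k1,hk1,hc⟩
        · refine ih (s.erase j) u' ?_ hu'pos ?_ hineq'
          · have := Finset.card_erase_of_mem hjs
            omega
          · intro i hi
            by_cases h1 : i = j
            · rw [h1, hu'j, hc]; ring
            · have his : i ∉ s := fun h => hi (Finset.mem_erase.mpr ⟨h1, h⟩)
              have h2 : i ≠ m := fun h => his (h ▸ hms)
              rw [hu'other i h1 h2]
              exact hsupp i his
        · refine ih (s.erase m) u' ?_ hu'pos ?_ hineq'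
          · have := Finset.card_erase_of_mem hms
            omega
          · intro i hi
            by_cases h2 : i = m
            · rw [h2, hu'm, hc]; ring
            · have his : i ∉ s := fun h => hi (Finset.mem_erase.mpr ⟨h2, h⟩)
              have h1 : i ≠ j := fun h => his (h ▸ hjs)
              rw [hu'other i h1 h2]
              exact hsupp i his
        · apply tight_case hn a g hg u' hu'pos k1
          have hk1m : k1 ≠ m := ((hmemE k1).mp hk1).1
          have hk1j : k1 ≠ j := ((hmemE k1).mp hk1).2
          rw [hT', hu'other k1 hk1j hk1m]
          have h2 : 2*a*(bnd k1) = a*T - (1+a)*u k1 := by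
            simp only [hbnd]
            field_simp
          rw [hc]
          linarith
      have hdecomp : u = fun z => u' z +
          ((p/(1+a)) * gen a j m z + (p/(1+a)) * gen a m j z) := by
        funext z
        simp only [hu', gen]
        by_cases h1 : z = j
        · subst h1
          simp only [if_pos rfl, if_neg hjm]
          field_simp
          simp only [ite_true]
          ring
        by_cases h2 : z = m
        · subst h2
          simp only [if_pos rfl, if_neg (Ne.symm hjm), if_neg h1]
          field_simp
          simp only [ite_true]
          ring
        simp only [if_neg h1, if_neg h2]
        ring
      rw [hdecomp]
      have hgen1 := inConeF_single (B := {v : Fin n → ℝ | ∃ σ : Equiv.Perm (Fin n), v = fun x => g (σ.symm x)})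
        (gen_mem hn a g hg hjm) (div_nonneg hppos.le (by linarith : (0:ℝ) ≤ 1 + a))
      have hgen2 := inConeF_single (B := {v : Fin n → ℝ | ∃ σ : Equiv.Perm (Fin n), v = fun x => g (σ.symm x)})
        (gen_mem hn a g hg (Ne.symm hjm)) (div_nonneg hppos.le (by linarith : (0:ℝ) ≤ 1 + a))
      exact inConeF_add hprog (inConeF_add hgen1 hgen2)
    · -- exactly two positive coordinates
      have hz2 : ∀ i, i ≠ j → i ≠ m → u i = 0 := by
        intro i h1 h2
        rcases (hu i).lt_or_eq with h' | h'
        · exfalso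
          have : i ∈ (P.erase j).erase m :=
            Finset.mem_erase.mpr ⟨h2, Finset.mem_erase.mpr ⟨h1, (hmemP i).mpr h'⟩⟩
          exact hE3 ⟨i, this⟩
        · exact h'.symm
      have hTjm : T = u j + u m := by
        rw [hT, ← Finset.add_sum_erase _ u (Finset.mem_univ j),
          ← Finset.add_sum_erase _ u (Finset.mem_erase.mpr ⟨Ne.symm hjm, Finset.mem_univ m⟩)]
        rw [Finset.sum_eq_zero]
        · ring
        · intro i hi
          have h2 := Finset.mem_erase.mp hi
          exact hz2 i (Finset.mem_erase.mp h2.2).1 h2.1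
      have h1 : u j < a * u m := by have := hstrict j; rw [hTjm] at this; linarith
      have h2 : u m < a * u j := by have := hstrict m; rw [hTjm] at this; linarith
      have ha1 : 1 < a := by
        rcases eq_or_lt_of_le ha with h|h
        · exfalso; rw [← h] at h1 h2; linarith
        · exact h
      have hden : 0 < a^2 - 1 := by nlinarith
      set x := (a * u m - u j) / (a^2 - 1) with hx
      set y := (a * u j - u m) / (a^2 - 1) with hy
      have hx0 : 0 ≤ x := div_nonneg (by linarith) hden.le
      have hy0 : 0 ≤ y := div_nonneg (by linarith) hden.le
      have hdecomp : u = fun z => x * gen a j m z + y * gen a m j z := by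
        funext z
        simp only [gen]
        by_cases hzj : z = j
        · rw [hzj, if_pos rfl, if_neg hjm, if_neg hjm, if_pos rfl, hx, hy]
          field_simp
          ring
        by_cases hzm : z = m
        · rw [hzm, if_neg (Ne.symm hjm), if_pos rfl, if_pos rfl, if_neg (Ne.symm hjm), hx, hy]
          field_simp
          ring
        rw [if_neg hzj, if_neg hzm, if_neg hzm, if_neg hzj, hz2 z hzj hzm]
        ring
      rw [hdecomp]
      exact inConeF_add (inConeF_single (gen_mem hn a g hg hjm) hx0)
        (inConeF_single (gen_mem hn a g hg (Ne.symm hjm)) hy0)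

/-- For `a ≥ 1` and `n ≥ 2`, a vector `u` with non-decreasing coordinates lies in the cone
generated by the `Sym(n)`-orbit of `(1, a, 0, …, 0)` iff `u₁ ≥ 0` and
`a(u₁ + ⋯ + u_{n-1}) ≥ u_n`. -/
theorem membership_in_orbit_cone (a : ℝ) (ha : 1 ≤ a) (n : ℕ) (hn : 2 ≤ n)
    (g : Fin n → ℝ)
    (hg : ∀ i : Fin n, g i = if (i : ℕ) = 0 then 1 else if (i : ℕ) = 1 then a else 0)
    (u : Fin n → ℝ) (hmono : Monotone u) :
    inConeF {v | ∃ σ : Equiv.Perm (Fin n), v = fun i => g (σ.symm i)} u ↔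
      (0 ≤ u ⟨0, by omega⟩ ∧
        u ⟨n - 1, by omega⟩ ≤
          a * ∑ i ∈ Finset.univ.filter (fun i : Fin n => (i : ℕ) < n - 1), u i) := by
  have ha0 : (0:ℝ) < a := by linarith
  set i0 : Fin n := ⟨0, by omega⟩ with hi0
  set i1 : Fin n := ⟨1, by omega⟩ with hi1
  set last : Fin n := ⟨n - 1, by omega⟩ with hlast
  have h01 : i0 ≠ i1 := by simp [hi0, hi1, Fin.ext_iff]
  have hg2 : ∀ x : Fin n, g x = (if x = i0 then (1:ℝ) else 0) + (if x = i1 then a else 0) := by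
    intro x
    rw [hg]
    by_cases h0 : x = i0
    · have : (x : ℕ) = 0 := by rw [h0]
      rw [if_pos this, if_pos h0, if_neg (h0 ▸ h01), add_zero]
    · have hv0 : ¬ (x : ℕ) = 0 := fun h => h0 (Fin.ext h)
      by_cases h1 : x = i1
      · have : (x : ℕ) = 1 := by rw [h1]
        rw [if_neg hv0, if_pos this, if_neg h0, if_pos h1, zero_add]
      · have hv1 : ¬ (x : ℕ) = 1 := fun h => h1 (Fin.ext h)
        rw [if_neg hv0, if_neg hv1, if_neg h0, if_neg h1, add_zero]
  have hgsum : ∑ x, g x = 1 + a := by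
    simp only [hg2]
    rw [Finset.sum_add_distrib, Finset.sum_ite_eq', Finset.sum_ite_eq']
    simp
  have hgnonneg : ∀ x, 0 ≤ g x := by
    intro x
    rw [hg2]
    split_ifs <;> norm_num <;> linarith
  have hgle : ∀ x, g x ≤ a := by
    intro x
    rw [hg2]
    split_ifs with h h2 h2 <;> [exact absurd (h ▸ h2 : i0 = i1) h01; linarith; linarith; linarith]
  have hfilter : Finset.univ.filter (fun i : Fin n => (i : ℕ) < n - 1)
      = Finset.univ.erase last := by
    ext i
    have h1 := i.isLt
    have h2 : (last : ℕ) = n - 1 := rfl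
    simp only [Finset.mem_filter, Finset.mem_univ, true_and, Finset.mem_erase, ne_eq, and_true]
    constructor
    · intro h hh
      rw [hh, h2] at h
      omega
    · intro h
      have : (i : ℕ) ≠ n - 1 := fun hh => h (Fin.ext (by rw [hh, h2]))
      omega
  rw [hfilter]
  have hTsplit := Finset.add_sum_erase Finset.univ u (Finset.mem_univ last)
  constructor
  · rintro ⟨k, c, b, hc, hb, he⟩
    have hux : ∀ x, 0 ≤ u x := by
      intro x
      rw [he]
      simp only [Finset.sum_apply, Pi.smul_apply, smul_eq_mul]
      apply Finset.sum_nonneg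
      intro i _
      obtain ⟨σ, hσ⟩ := hb i
      rw [hσ]
      exact mul_nonneg (hc i) (hgnonneg _)
    refine ⟨hux i0, ?_⟩
    have hTe : ∑ x, u x = ∑ i, c i * (1 + a) := by
      rw [he]
      simp only [Finset.sum_apply, Pi.smul_apply, smul_eq_mul]
      rw [Finset.sum_comm]
      refine Finset.sum_congr rfl (fun i _ => ?_)
      rw [← Finset.mul_sum]
      congr 1
      obtain ⟨σ, hσ⟩ := hb i
      rw [hσ]
      rw [Equiv.sum_comp σ.symm g]
      exact hgsum
    have hlaste : u last = ∑ i, c i * b i last := by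
      rw [he]
      simp only [Finset.sum_apply, Pi.smul_apply, smul_eq_mul]
    have hblast : ∀ i, 0 ≤ b i last ∧ b i last ≤ a := by
      intro i
      obtain ⟨σ, hσ⟩ := hb i
      rw [hσ]
      exact ⟨hgnonneg _, hgle _⟩
    have hkey : 0 ≤ a * (∑ x, u x) - (1 + a) * u last := by
      rw [hTe, hlaste, Finset.mul_sum, Finset.mul_sum, ← Finset.sum_sub_distrib]
      apply Finset.sum_nonneg
      intro i _
      have h1 := (hblast i).1
      have h2 := (hblast i).2
      have h3 := hc i
      nlinarith [mul_nonneg h3 (sub_nonneg.mpr h2)]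
    have : ∑ x, u x = u last + ∑ x ∈ Finset.univ.erase last, u x := hTsplit.symm
    rw [this] at hkey
    linarith
  · rintro ⟨h0, hS⟩
    apply key_lemma hn a ha g hg n Finset.univ u (by simp)
    · intro i
      have : i0 ≤ i := by
        rw [hi0, Fin.le_def]
        simp
      exact le_trans h0 (hmono this)
    · intro i hi
      simp at hi
    · intro k
      have hk : u k ≤ u last := by
        apply hmono
        rw [hlast, Fin.le_def]
        have := k.isLt
        simp
        omega
      have : ∑ x, u x = u last + ∑ x ∈ Finset.univ.erase last, u x := hTsplit.symm
      rw [this]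
      nlinarith
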